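/- arXiv:1307.7622 — 4 statements merged into one kernel-verified Lean document; each statement's English description precedes it below -/
import Mathlib

section
/- Consider the optimization problem min over (E^s, E^b ∈ ℝ^n) of f(E^s, E^b) = C(E^c + E^s - Σ_j E^b_j) + Σ_j γ(E^b_j) + Σ_j λ_j E^b_j - λ_i E^s subject to E^s ≥ 0, E^b_j ≥ 0 for all j, and E^c + E^s - Σ_j E^b_j ≥ 0, where C and γ are strictly convex, increasing, and differentiable, and E^c > 0. If λ_i ≤ C'(E^c) and min_j λ_j ≥ C'(E^c) - γ'(0), then the point E^s = 0, E^b = 0 is a global minimizer. -/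
open Set Finset

/-- Tangent line inequality for a differentiable convex function on `univ`. -/
lemma tangent_le_of_convexOn {f : ℝ → ℝ} (hf : ConvexOn ℝ Set.univ f)
    (hd : Differentiable ℝ f) (x y : ℝ) :
    f x + deriv f x * (y - x) ≤ f y := by
  rcases lt_trichotomy x y with h | h | h
  · have := hf.deriv_le_slope (Set.mem_univ x) (Set.mem_univ y) h (hd x)
    rw [slope_def_field, le_div_iff₀ (by linarith : (0:ℝ) < y - x)] at this
    nlinarith
  · simp [h]
  · have := hf.slope_le_deriv (Set.mem_univ y) (Set.mem_univ x) h (hd x)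
    rw [slope_def_field, div_le_iff₀ (by linarith : (0:ℝ) < x - y)] at this
    nlinarith

/-- Case 1 of the microgrid subproblem: if the selling price is below the marginal
generation cost and all buying prices are above the marginal benefit, then neither
selling nor buying (`Es = 0`, `Eb = 0`) is a global minimizer. -/
theorem case1_no_trade_optimal
    {ι : Type*} [Fintype ι]
    (C γ : ℝ → ℝ)
    (hCconv : StrictConvexOn ℝ Set.univ C) (hCmono : StrictMono C)
    (hCdiff : Differentiable ℝ C)
    (hγconv : StrictConvexOn ℝ Set.univ γ) (hγmono : StrictMono γ)
    (hγdiff : Differentiable ℝ γ) (hγ0 : γ 0 = 0)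
    (Ec : ℝ) (hEc : 0 < Ec)
    (lamI : ℝ) (lam : ι → ℝ)
    (hsell : lamI ≤ deriv C Ec)
    (hbuy : ∀ j, deriv C Ec - deriv γ 0 ≤ lam j) :
    ∀ (Es : ℝ) (Eb : ι → ℝ), 0 ≤ Es → (∀ j, 0 ≤ Eb j) →
      0 ≤ Ec + Es - ∑ j, Eb j →
      C (Ec + 0 - ∑ _j : ι, (0 : ℝ)) + ∑ _j : ι, γ (0 : ℝ) + ∑ j : ι, lam j * 0 - lamI * 0 ≤
        C (Ec + Es - ∑ j, Eb j) + ∑ j, γ (Eb j) + ∑ j, lam j * Eb j - lamI * Es := by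
  intro Es Eb hEs hEb hfeas
  set S := ∑ j, Eb j with hS
  have hS0 : 0 ≤ S := Finset.sum_nonneg fun j _ => hEb j
  -- tangent bound for C at Ec
  have hC : C Ec + deriv C Ec * (Es - S) ≤ C (Ec + Es - S) := by
    have := tangent_le_of_convexOn hCconv.convexOn hCdiff Ec (Ec + Es - S)
    have h2 : Ec + Es - S - Ec = Es - S := by ring
    rwa [h2] at this
  -- tangent bound for γ at 0
  have hγsum : deriv γ 0 * S ≤ ∑ j, γ (Eb j) := by
    rw [hS, Finset.mul_sum]
    apply Finset.sum_le_sum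
    intro j _
    have := tangent_le_of_convexOn hγconv.convexOn hγdiff 0 (Eb j)
    simpa [hγ0] using this
  -- price bound
  have hlam : (deriv C Ec - deriv γ 0) * S ≤ ∑ j, lam j * Eb j := by
    rw [hS, Finset.mul_sum]
    exact Finset.sum_le_sum fun j _ => mul_le_mul_of_nonneg_right (hbuy j) (hEb j)
  have hsellE : lamI * Es ≤ deriv C Ec * Es := mul_le_mul_of_nonneg_right hsell hEs
  simp only [hγ0, mul_zero, sub_zero, add_zero, Finset.sum_const_zero]
  nlinarith
end

section
/- Consider minimizing f(E^s, E^b) = C(E^c + E^s - Σ_j E^b_j) + Σ_j γ(E^b_j) + Σ_j λ_j E^b_j - λ_i E^s over E^s ≥ 0, E^b_j ≥ 0, E^c + E^s - Σ_j E^b_j ≥ 0, with C, γ strictly convex increasing differentiable and γ(0)=0. If λ_i > C'(E^c) and λ_j ≥ λ_i - γ'(0) for all j, then the unique global minimizer is E^b = 0 and E^s = χ(λ_i) - E^c, where χ is the inverse of C'. -/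
open Set Finset

/-- Local net expenditure of a microgrid. -/
noncomputable def netExpenditure {ι : Type*} [Fintype ι]
    (C γ : ℝ → ℝ) (Ec lamI : ℝ) (lam : ι → ℝ) (Es : ℝ) (Eb : ι → ℝ) : ℝ :=
  C (Ec + Es - ∑ j, Eb j) + ∑ j, γ (Eb j) + ∑ j, lam j * Eb j - lamI * Es

/-- Tangent line inequality for strictly convex differentiable functions. -/
lemma tangent_lt {f : ℝ → ℝ} (hf : StrictConvexOn ℝ Set.univ f)
    (hfd : Differentiable ℝ f) {a x : ℝ} (hxa : x ≠ a) :
    f a + deriv f a * (x - a) < f x := by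
  rcases lt_or_gt_of_ne hxa with h | h
  · have := hf.slope_lt_deriv (mem_univ x) (mem_univ a) h (hfd a)
    rw [slope_def_field] at this
    have hax : (0:ℝ) < a - x := by linarith
    rw [div_lt_iff₀ hax] at this
    nlinarith
  · have := hf.deriv_lt_slope (mem_univ a) (mem_univ x) h (hfd a)
    rw [slope_def_field] at this
    have hax : (0:ℝ) < x - a := by linarith
    rw [lt_div_iff₀ hax] at this
    nlinarith

/-- Case 4 of the microgrid subproblem: generate and sell, do not buy.
The unique global minimizer is `Eb = 0`, `Es = χ(λᵢ) - Ec` where `χ = (C')⁻¹`. -/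
theorem case4_generate_and_sell
    {ι : Type*} [Fintype ι]
    (C γ : ℝ → ℝ)
    (hCconv : StrictConvexOn ℝ Set.univ C) (hCmono : StrictMono C)
    (hCdiff : Differentiable ℝ C)
    (hγconv : StrictConvexOn ℝ Set.univ γ) (hγmono : StrictMono γ)
    (hγdiff : Differentiable ℝ γ) (hγ0 : γ 0 = 0)
    (Ec : ℝ) (hEc : 0 < Ec)
    (lamI : ℝ) (lam : ι → ℝ)
    (g : ℝ) (hg : deriv C g = lamI)  -- g = χ(λᵢ): λᵢ is in the range of C'
    (hsell : lamI > deriv C Ec)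
    (hbuy : ∀ j, lam j ≥ lamI - deriv γ 0) :
    (0 ≤ g - Ec ∧ (∀ j : ι, (0:ℝ) ≤ 0) ∧ 0 ≤ Ec + (g - Ec) - ∑ _j : ι, (0:ℝ)) ∧
    ∀ (Es : ℝ) (Eb : ι → ℝ), 0 ≤ Es → (∀ j, 0 ≤ Eb j) →
      0 ≤ Ec + Es - ∑ j, Eb j →
      netExpenditure C γ Ec lamI lam (g - Ec) (fun _ => 0) ≤
          netExpenditure C γ Ec lamI lam Es Eb ∧
        (netExpenditure C γ Ec lamI lam Es Eb =
            netExpenditure C γ Ec lamI lam (g - Ec) (fun _ => 0) →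
          Es = g - Ec ∧ Eb = fun _ => 0) := by
  -- C' is strictly monotone, hence Ec < g
  have hderivMono : StrictMonoOn (deriv C) Set.univ :=
    hCconv.strictMonoOn_deriv (fun x _ => hCdiff x)
  have hEcg : Ec < g := by
    by_contra h
    push_neg at h
    rcases eq_or_lt_of_le h with h | h
    · rw [h] at hg; linarith
    · have := hderivMono (mem_univ g) (mem_univ Ec) h
      linarith
  -- rewrite of netExpenditure
  have key : ∀ (Es : ℝ) (Eb : ι → ℝ), netExpenditure C γ Ec lamI lam Es Eb =
      (C (Ec + Es - ∑ j, Eb j) - lamI * (Ec + Es - ∑ j, Eb j)) +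
        ∑ j, (γ (Eb j) + (lam j - lamI) * Eb j) + lamI * Ec := by
    intro Es Eb
    simp only [netExpenditure, Finset.sum_add_distrib, sub_mul, Finset.sum_sub_distrib,
      ← Finset.mul_sum]
    ring
  -- value at the candidate point
  have hopt : netExpenditure C γ Ec lamI lam (g - Ec) (fun _ => 0) =
      (C g - lamI * g) + lamI * Ec := by
    rw [key]
    simp [hγ0]
  -- tangent line bound for C at g
  have hCtan : ∀ x : ℝ, x ≠ g → C g - lamI * g < C x - lamI * x := by
    intro x hx
    have := tangent_lt hCconv hCdiff hx (a := g)
    rw [hg] at this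
    nlinarith
  -- the per-grid terms are nonnegative
  have hψ : ∀ (j : ι) (t : ℝ), 0 ≤ t → 0 ≤ γ t + (lam j - lamI) * t := by
    intro j t ht
    rcases eq_or_lt_of_le ht with h | h
    · simp [← h, hγ0]
    · have htan := tangent_lt hγconv hγdiff (a := 0) (x := t) (ne_of_gt h)
      rw [hγ0] at htan
      have := hbuy j
      nlinarith
  have hψpos : ∀ (j : ι) (t : ℝ), 0 < t → 0 < γ t + (lam j - lamI) * t := by
    intro j t ht
    have htan := tangent_lt hγconv hγdiff (a := 0) (x := t) (ne_of_gt ht)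
    rw [hγ0] at htan
    have := hbuy j
    nlinarith
  refine ⟨⟨by linarith, fun _ => le_refl 0, by simp; linarith⟩, ?_⟩
  intro Es Eb hEs hEb hx
  set x := Ec + Es - ∑ j, Eb j with hxdef
  have hsum : (0:ℝ) ≤ ∑ j, (γ (Eb j) + (lam j - lamI) * Eb j) :=
    Finset.sum_nonneg fun j _ => hψ j _ (hEb j)
  have hCx : C g - lamI * g ≤ C x - lamI * x := by
    rcases eq_or_ne x g with h | h
    · rw [h]
    · exact le_of_lt (hCtan x h)
  constructor
  · rw [hopt, key, ← hxdef]
    linarith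
  · intro heq
    rw [hopt, key, ← hxdef] at heq
    -- both slack terms must vanish
    have hxg : x = g := by
      by_contra h
      have := hCtan x h
      linarith
    have hsum0 : ∑ j, (γ (Eb j) + (lam j - lamI) * Eb j) = 0 := by
      rw [hxg] at heq
      linarith
    have hEb0 : ∀ j, Eb j = 0 := by
      intro j
      by_contra h
      have hpos : 0 < Eb j := lt_of_le_of_ne (hEb j) (Ne.symm h)
      have h1 : 0 < γ (Eb j) + (lam j - lamI) * Eb j := hψpos j _ hpos
      have h2 : ∀ k ∈ Finset.univ, (0:ℝ) ≤ γ (Eb k) + (lam k - lamI) * Eb k :=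
        fun k _ => hψ k _ (hEb k)
      have := Finset.single_le_sum h2 (Finset.mem_univ j)
      linarith
    have hsE : ∑ j, Eb j = 0 := by
      rw [Finset.sum_eq_zero fun j _ => hEb0 j]
    refine ⟨?_, funext hEb0⟩
    have : Ec + Es - 0 = g := by rw [← hsE]; exact hxg
    linarith
end

section
/- Consider minimizing f(E^s, E^b) = C(E^c + E^s - Σ_j E^b_j) + Σ_j γ(E^b_j) + Σ_j λ_j E^b_j - λ_i E^s over E^s ≥ 0, E^b_j ≥ 0, E^c + E^s - Σ_j E^b_j ≥ 0, with C, γ strictly convex increasing differentiable, γ(0)=0, E^c > 0. Let S* = {j : λ_j < λ_i - γ'(0)} and suppose λ_i ≤ C'(0), S* ≠ ∅, and Σ_{j∈S*} Γ(λ_i - λ_j) > E^c, where Γ = (γ')⁻¹. Then the unique global minimizer is E^b_j = Γ(λ_i - λ_j) for j ∈ S*, E^b_j = 0 otherwise, E^g = E^c + E^s - Σ_j E^b_j = 0, and E^s = Σ_{j∈S*} E^b_j - E^c > 0. -/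
open Set Finset

private lemma strict_min_right {f : ℝ → ℝ} (hf : StrictConvexOn ℝ Set.univ f)
    (hd : Differentiable ℝ f) {a x : ℝ} (h0 : 0 ≤ deriv f a) (hax : a < x) :
    f a < f x := by
  have h := hf.deriv_lt_slope (Set.mem_univ a) (Set.mem_univ x) hax (hd a)
  rw [slope_def_field] at h
  have hx : 0 < x - a := by linarith
  have h3 := (lt_div_iff₀ hx).mp (h0.trans_lt h)
  linarith

private lemma strict_min_left {f : ℝ → ℝ} (hf : StrictConvexOn ℝ Set.univ f)
    (hd : Differentiable ℝ f) {a x : ℝ} (h0 : deriv f a ≤ 0) (hax : x < a) :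
    f a < f x := by
  have h := hf.slope_lt_deriv (Set.mem_univ x) (Set.mem_univ a) hax (hd a)
  rw [slope_def_field] at h
  have hx : 0 < a - x := by linarith
  have h3 := (div_lt_iff₀ hx).mp (h.trans_le h0)
  linarith

/-- Case 5 of the microgrid subproblem: the microgrid sells and buys but does not
generate. `B j = Γ(λᵢ - λⱼ)` are the bought energies from the cheap neighbors. -/
theorem case5_sell_buy_no_generation
    {ι : Type*} [Fintype ι]
    (C γ : ℝ → ℝ)
    (hCconv : StrictConvexOn ℝ Set.univ C) (hCmono : StrictMono C)
    (hCdiff : Differentiable ℝ C)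
    (hγconv : StrictConvexOn ℝ Set.univ γ) (hγmono : StrictMono γ)
    (hγdiff : Differentiable ℝ γ) (hγ0 : γ 0 = 0)
    (Ec : ℝ) (hEc : 0 < Ec)
    (lamI : ℝ) (lam : ι → ℝ)
    (B : ι → ℝ)
    (hB : ∀ j, lam j < lamI - deriv γ 0 → deriv γ (B j) = lamI - lam j ∧ 0 < B j)
    (hlamI : lamI ≤ deriv C 0)
    (hSne : ∃ j, lam j < lamI - deriv γ 0)
    (hbig : Ec < ∑ j ∈ Finset.univ.filter (fun j => lam j < lamI - deriv γ 0), B j) :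
    -- the optimal sold energy is positive and the generated energy is zero
    (0 < (∑ j ∈ Finset.univ.filter (fun j => lam j < lamI - deriv γ 0), B j) - Ec ∧
      Ec + ((∑ j ∈ Finset.univ.filter (fun j => lam j < lamI - deriv γ 0), B j) - Ec) -
        (∑ j, (if lam j < lamI - deriv γ 0 then B j else 0)) = 0) ∧
    -- unique global minimizer
    ∀ (Es : ℝ) (Eb : ι → ℝ), 0 ≤ Es → (∀ j, 0 ≤ Eb j) →
      0 ≤ Ec + Es - ∑ j, Eb j →
      netExpenditure C γ Ec lamI lam
          ((∑ j ∈ Finset.univ.filter (fun j => lam j < lamI - deriv γ 0), B j) - Ec)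
          (fun j => if lam j < lamI - deriv γ 0 then B j else 0) ≤
        netExpenditure C γ Ec lamI lam Es Eb ∧
      (netExpenditure C γ Ec lamI lam Es Eb =
          netExpenditure C γ Ec lamI lam
            ((∑ j ∈ Finset.univ.filter (fun j => lam j < lamI - deriv γ 0), B j) - Ec)
            (fun j => if lam j < lamI - deriv γ 0 then B j else 0) →
        Es = (∑ j ∈ Finset.univ.filter (fun j => lam j < lamI - deriv γ 0), B j) - Ec ∧
          Eb = fun j => if lam j < lamI - deriv γ 0 then B j else 0) := by
  set b : ι → ℝ := fun j => if lam j < lamI - deriv γ 0 then B j else 0 with hbdef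
  set T : ℝ := ∑ j ∈ Finset.univ.filter (fun j => lam j < lamI - deriv γ 0), B j with hTdef
  have hsum : ∑ j, b j = T := by
    rw [hTdef, Finset.sum_filter]
  have hEs0 : (0:ℝ) < T - Ec := by linarith
  have hg0 : Ec + (T - Ec) - ∑ j, b j = 0 := by rw [hsum]; ring
  -- the objective splits as Φ(g) + ∑ ψ j (Eb j) + lamI * Ec
  set Φ : ℝ → ℝ := fun x => C x + -(lamI * x) with hΦdef
  set ψ : ι → ℝ → ℝ := fun j x => γ x + -((lamI - lam j) * x) with hψdef
  have hlin : ∀ c : ℝ, ConvexOn ℝ Set.univ (fun x : ℝ => -(c * x)) := by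
    intro c
    exact ⟨convex_univ, fun x _ y _ a b' _ _ _ => by
      simp only [smul_eq_mul]; exact le_of_eq (by ring)⟩
  have hΦconv : StrictConvexOn ℝ Set.univ Φ := hCconv.add_convexOn (hlin lamI)
  have hψconv : ∀ j, StrictConvexOn ℝ Set.univ (ψ j) :=
    fun j => hγconv.add_convexOn (hlin (lamI - lam j))
  have hΦdiff : Differentiable ℝ Φ :=
    hCdiff.add ((differentiable_id.const_mul lamI).neg)
  have hψdiff : ∀ j, Differentiable ℝ (ψ j) :=
    fun j => hγdiff.add ((differentiable_id.const_mul (lamI - lam j)).neg)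
  have hΦderiv : ∀ x, deriv Φ x = deriv C x - lamI := by
    intro x
    have h1 : HasDerivAt Φ (deriv C x + -(lamI * 1)) x :=
      ((hCdiff x).hasDerivAt).add (((hasDerivAt_id x).const_mul lamI).neg)
    have := h1.deriv
    simpa [sub_eq_add_neg] using this
  have hψderiv : ∀ j x, deriv (ψ j) x = deriv γ x - (lamI - lam j) := by
    intro j x
    have h1 : HasDerivAt (ψ j) (deriv γ x + -((lamI - lam j) * 1)) x :=
      ((hγdiff x).hasDerivAt).add (((hasDerivAt_id x).const_mul (lamI - lam j)).neg)
    have := h1.deriv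
    simpa [sub_eq_add_neg] using this
  -- key decomposition of the objective
  have key : ∀ (Es : ℝ) (Eb : ι → ℝ), netExpenditure C γ Ec lamI lam Es Eb =
      Φ (Ec + Es - ∑ j, Eb j) + ∑ j, ψ j (Eb j) + lamI * Ec := by
    intro Es Eb
    simp only [netExpenditure, hΦdef, hψdef, Finset.sum_add_distrib, Finset.sum_neg_distrib,
      sub_mul, Finset.sum_sub_distrib, ← Finset.mul_sum]
    ring
  -- Φ has a strict minimum at 0 on [0, ∞)
  have hΦmin : ∀ g : ℝ, 0 ≤ g → g ≠ 0 → Φ 0 < Φ g := by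
    intro g hg hg0'
    have h0 : 0 ≤ deriv Φ 0 := by rw [hΦderiv]; linarith
    exact strict_min_right hΦconv hΦdiff h0 (lt_of_le_of_ne hg (Ne.symm hg0'))
  -- ψ j has a strict minimum at b j on [0, ∞)
  have hψlt : ∀ j (x : ℝ), 0 ≤ x → x ≠ b j → ψ j (b j) < ψ j x := by
    intro j x hx hne
    by_cases hj : lam j < lamI - deriv γ 0
    · have hBj := hB j hj
      have hbj : b j = B j := if_pos hj
      have hd0 : deriv (ψ j) (B j) = 0 := by
        rw [hψderiv, hBj.1]; ring
      rw [hbj] at hne ⊢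
      rcases lt_or_gt_of_ne hne with h | h
      · exact strict_min_left (hψconv j) (hψdiff j) (le_of_eq hd0) h
      · exact strict_min_right (hψconv j) (hψdiff j) (ge_of_eq hd0) h
    · have hbj : b j = 0 := if_neg hj
      have hd0 : 0 ≤ deriv (ψ j) 0 := by
        rw [hψderiv]; push_neg at hj; linarith
      rw [hbj] at hne ⊢
      exact strict_min_right (hψconv j) (hψdiff j) hd0 (lt_of_le_of_ne hx (Ne.symm hne))
  have hψle : ∀ j (x : ℝ), 0 ≤ x → ψ j (b j) ≤ ψ j x := by
    intro j x hx
    by_cases hne : x = b j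
    · rw [hne]
    · exact le_of_lt (hψlt j x hx hne)
  have hbnonneg : ∀ j, 0 ≤ b j := by
    intro j
    by_cases hj : lam j < lamI - deriv γ 0
    · simp only [hbdef, if_pos hj]; exact le_of_lt (hB j hj).2
    · simp only [hbdef, if_neg hj]; exact le_refl 0
  refine ⟨⟨hEs0, hg0⟩, ?_⟩
  intro Es Eb hEs hEb hgfeas
  have hcand : netExpenditure C γ Ec lamI lam (T - Ec) b =
      Φ 0 + ∑ j, ψ j (b j) + lamI * Ec := by
    rw [key, hg0]
  have hpt : netExpenditure C γ Ec lamI lam Es Eb =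
      Φ (Ec + Es - ∑ j, Eb j) + ∑ j, ψ j (Eb j) + lamI * Ec := key Es Eb
  set g : ℝ := Ec + Es - ∑ j, Eb j with hgdef
  have hΦle : Φ 0 ≤ Φ g := by
    by_cases hgz : g = 0
    · rw [hgz]
    · exact le_of_lt (hΦmin g hgfeas hgz)
  have hsumle : ∑ j, ψ j (b j) ≤ ∑ j, ψ j (Eb j) :=
    Finset.sum_le_sum (fun j _ => hψle j (Eb j) (hEb j))
  constructor
  · rw [hcand, hpt]; linarith
  · intro heq
    rw [hcand, hpt] at heq
    have hEbeq : ∀ j, Eb j = b j := by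
      intro j
      by_contra hne
      have h1 : ψ j (b j) < ψ j (Eb j) := hψlt j (Eb j) (hEb j) hne
      have h2 : ∑ j, ψ j (b j) < ∑ j, ψ j (Eb j) :=
        Finset.sum_lt_sum (fun i _ => hψle i (Eb i) (hEb i)) ⟨j, Finset.mem_univ j, h1⟩
      linarith
    have hsumEb : ∑ j, Eb j = T := by
      rw [← hsum]; exact Finset.sum_congr rfl (fun j _ => hEbeq j)
    have hgz : g = 0 := by
      by_contra hgz
      have := hΦmin g hgfeas hgz
      linarith
    constructor
    · have : Ec + Es - T = 0 := by rw [← hsumEb]; exact hgz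
      linarith
    · funext j; exact hEbeq j
end

section
/- Let C, γ be strictly convex, increasing, differentiable, γ(0)=0, E^c > 0. Suppose at prices (λ_i, {λ_j}) the Case 6 conditions hold: λ_i > C'(0), S* = {j : λ_j < λ_i - γ'(0)} ≠ ∅, and λ_i > C'(E^c - Σ_{j∈S*} Γ(λ_i - λ_j)). Further suppose the price identities λ_i = C'(E^g) with E^g = χ(λ_i) and λ_j = λ_i - γ'(E_{j,i}) for j ∈ S*, where E_{j,i} = Γ(λ_i - λ_j) > 0. Then the resulting net expenditure C(E^c + E₀) - C'(E^c + E₀)E₀ + Σ_{j∈S*} (γ(E_{j,i}) - γ'(E_{j,i})E_{j,i}), with E₀ = E^s - Σ_{j∈S*} E_{j,i}, is strictly less than C(E^c). In particular, trading strictly reduces the microgrid's cost in Case 6. -/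
open Set Finset

/-- Supporting-line inequality for a strictly convex differentiable function. -/
lemma strict_support_line {f : ℝ → ℝ} (hf : StrictConvexOn ℝ Set.univ f)
    (hd : Differentiable ℝ f) {x y : ℝ} (hxy : x ≠ y) :
    f x + deriv f x * (y - x) < f y := by
  rcases lt_or_gt_of_ne hxy with h | h
  · have hs := hf.deriv_lt_slope (Set.mem_univ x) (Set.mem_univ y) h (hd x)
    rw [slope_def_field, lt_div_iff₀ (by linarith : (0:ℝ) < y - x)] at hs
    linarith
  · have hs := hf.slope_lt_deriv (Set.mem_univ y) (Set.mem_univ x) h (hd x)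
    rw [slope_def_field, div_lt_iff₀ (by linarith : (0:ℝ) < x - y)] at hs
    linarith

/-- In Case 6, trading strictly reduces the microgrid's cost: the net expenditure
is strictly less than the stand-alone cost `C(Eᶜ)`. Here `g = χ(λᵢ)` is the
generated energy, `B j = Γ(λᵢ - λⱼ)` the bought energies, and `E₀ = g - Eᶜ`. -/
theorem case6_trading_strictly_beneficial
    {ι : Type*} [Fintype ι]
    (C γ : ℝ → ℝ)
    (hCconv : StrictConvexOn ℝ Set.univ C) (hCmono : StrictMono C)
    (hCdiff : Differentiable ℝ C)
    (hγconv : StrictConvexOn ℝ Set.univ γ) (hγmono : StrictMono γ)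
    (hγdiff : Differentiable ℝ γ) (hγ0 : γ 0 = 0)
    (Ec : ℝ) (hEc : 0 < Ec)
    (lamI : ℝ) (lam : ι → ℝ)
    (hlamI : lamI > deriv C 0)
    (hSne : ∃ j, lam j < lamI - deriv γ 0)
    (g : ℝ) (hg : deriv C g = lamI)  -- price identity λᵢ = C'(Eᵍ), g = χ(λᵢ)
    (B : ι → ℝ)
    (hB : ∀ j, lam j < lamI - deriv γ 0 →
        lam j = lamI - deriv γ (B j) ∧ 0 < B j)  -- price identities λⱼ = λᵢ - γ'(E_{j,i})
    (hgen : lamI > deriv C (Ec - ∑ j ∈ Finset.univ.filter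
        (fun j => lam j < lamI - deriv γ 0), B j)) :
    C (Ec + (g - Ec)) - deriv C (Ec + (g - Ec)) * (g - Ec) +
        ∑ j ∈ Finset.univ.filter (fun j => lam j < lamI - deriv γ 0),
          (γ (B j) - deriv γ (B j) * B j) <
      C Ec := by
  set S := Finset.univ.filter (fun j => lam j < lamI - deriv γ 0) with hS
  have hSnonempty : S.Nonempty := by
    obtain ⟨j, hj⟩ := hSne
    exact ⟨j, by simp [hS, hj]⟩
  -- each transport term is strictly negative
  have hterm : ∀ j ∈ S, γ (B j) - deriv γ (B j) * B j < 0 := by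
    intro j hj
    have hjmem : lam j < lamI - deriv γ 0 := by simpa [hS] using hj
    obtain ⟨-, hBj⟩ := hB j hjmem
    have := strict_support_line hγconv hγdiff (x := B j) (y := 0) (by linarith)
    rw [hγ0] at this
    linarith
  have hsum : ∑ j ∈ S, (γ (B j) - deriv γ (B j) * B j) < 0 := by
    have := Finset.sum_lt_sum_of_nonempty hSnonempty hterm
    simpa using this
  -- convexity part: C g - C' g (g - Ec) ≤ C Ec
  have hconv : C (Ec + (g - Ec)) - deriv C (Ec + (g - Ec)) * (g - Ec) ≤ C Ec := by
    have hEg : Ec + (g - Ec) = g := by ring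
    rw [hEg]
    rcases eq_or_ne g Ec with h | h
    · simp [h]
    · have := strict_support_line hCconv hCdiff (x := g) (y := Ec) h
      linarith
  linarith
end
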